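/- Let (x_n) satisfy x_{n+10} = x_n / (A + B·x_n·x_{n+2}·x_{n+4}·x_{n+6}·x_{n+8}) with A ≠ 1, all terms nonzero and all denominators nonzero. Then for each k ∈ {0,...,9} and n ≥ 0, x_{10n+k} = x_k · ∏_{s=0}^{n-1} (A^{5s+⌊k/2⌋} + B·(1−A^{5s+⌊k/2⌋})/(1−A)·P_{τ(k)}) / (A^{5s+1+⌊k/2⌋} + B·(1−A^{5s+1+⌊k/2⌋})/(1−A)·P_{τ(k)}), where P_j = x_j·x_{j+2}·x_{j+4}·x_{j+6}·x_{j+8} and τ(k) = k mod 2. -/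

import Mathlib

theorem stmt5 (A B : ℝ) (hA : A ≠ 1) (x : ℕ → ℝ)
    (hx : ∀ n, x n ≠ 0)
    (hden : ∀ n, A + B * (x n * x (n+2) * x (n+4) * x (n+6) * x (n+8)) ≠ 0)
    (hrec : ∀ n, x (n + 10) =
      x n / (A + B * (x n * x (n+2) * x (n+4) * x (n+6) * x (n+8)))) :
    ∀ k < 10, ∀ n : ℕ,
      x (10 * n + k) = x k * ∏ s ∈ Finset.range n,
        (A ^ (5 * s + k / 2) + B * (1 - A ^ (5 * s + k / 2)) / (1 - A) *
            (x (k % 2) * x (k % 2 + 2) * x (k % 2 + 4) * x (k % 2 + 6) * x (k % 2 + 8))) /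
        (A ^ (5 * s + 1 + k / 2) + B * (1 - A ^ (5 * s + 1 + k / 2)) / (1 - A) *
            (x (k % 2) * x (k % 2 + 2) * x (k % 2 + 4) * x (k % 2 + 6) * x (k % 2 + 8))) := by
  have h1A : (1:ℝ) - A ≠ 0 := sub_ne_zero.mpr (Ne.symm hA)
  intro k hk
  set t := k % 2 with ht
  set q := k / 2 with hq
  set Pt := x t * x (t+2) * x (t+4) * x (t+6) * x (t+8) with hPt
  set c : ℕ → ℝ := fun m => A ^ m + B * (1 - A ^ m) / (1 - A) * Pt with hc
  have hcdef : ∀ m, A ^ m + B * (1 - A ^ m) / (1 - A) * Pt = c m := fun m => rfl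
  have hPtne : Pt ≠ 0 := by
    rw [hPt]
    exact mul_ne_zero (mul_ne_zero (mul_ne_zero (mul_ne_zero (hx t) (hx _)) (hx _)) (hx _)) (hx _)
  have hPne : ∀ n, x n * x (n+2) * x (n+4) * x (n+6) * x (n+8) ≠ 0 := fun n =>
    mul_ne_zero (mul_ne_zero (mul_ne_zero (mul_ne_zero (hx n) (hx _)) (hx _)) (hx _)) (hx _)
  have hcsucc : ∀ m, c (m+1) = A * c m + B * Pt := by
    intro m
    show A ^ (m+1) + B * (1 - A ^ (m+1)) / (1 - A) * Pt
        = A * (A ^ m + B * (1 - A ^ m) / (1 - A) * Pt) + B * Pt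
    field_simp
    ring
  have hkey : ∀ m, (x (2*m+t) * x (2*m+t+2) * x (2*m+t+4) * x (2*m+t+6) * x (2*m+t+8)) * c m
      = Pt := by
    intro m
    induction m with
    | zero =>
      have e : 2*0+t = t := by omega
      rw [e]
      show Pt * (A ^ 0 + B * (1 - A ^ 0) / (1 - A) * Pt) = Pt
      simp
    | succ m ih =>
      have e1 : 2*(m+1)+t = 2*m+t+2 := by ring
      rw [e1]
      have e2 : 2*m+t+2+2 = 2*m+t+4 := by omega
      have e3 : 2*m+t+2+4 = 2*m+t+6 := by omega
      have e4 : 2*m+t+2+6 = 2*m+t+8 := by omega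
      have e5 : 2*m+t+2+8 = 2*m+t+10 := by omega
      rw [e2, e3, e4, e5, hrec (2*m+t), hcsucc]
      have hd := hden (2*m+t)
      have hinv := mul_inv_cancel₀ hd
      rw [← ih, div_eq_mul_inv]
      linear_combination (x (2*m+t) * x (2*m+t+2) * x (2*m+t+4) * x (2*m+t+6) * x (2*m+t+8) * c m) * hinv
  intro n
  simp only [hcdef]
  induction n with
  | zero => simp
  | succ n ih =>
    rw [Finset.prod_range_succ, ← mul_assoc, ← ih]
    have e : 10*(n+1)+k = 10*n+k+10 := by ring
    rw [e, hrec (10*n+k)]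
    have hk2 := hkey (5*n+q)
    have eidx : 2*(5*n+q)+t = 10*n+k := by omega
    rw [eidx] at hk2
    have hcm : c (5*n+q) ≠ 0 := by
      intro h0
      rw [h0, mul_zero] at hk2
      exact hPtne hk2.symm
    have hd := hden (10*n+k)
    have hcs : c (5*n+q+1)
        = (A + B * (x (10*n+k) * x (10*n+k+2) * x (10*n+k+4) * x (10*n+k+6) * x (10*n+k+8)))
          * c (5*n+q) := by
      rw [hcsucc, ← hk2]; ring
    have e6 : 5*n+1+q = 5*n+q+1 := by omega
    rw [e6, hcs]
    have hcm1 : (A + B * (x (10*n+k) * x (10*n+k+2) * x (10*n+k+4) * x (10*n+k+6) * x (10*n+k+8)))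
          * c (5*n+q) ≠ 0 := mul_ne_zero hd hcm
    field_simp
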